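/- For μ > 0, the function g : ℝ → ℝ defined by g(x) = f_μ(|x|) + x² = μ − max(√μ − |x|, 0)² + x² is convex on ℝ. -/

import Mathlib

noncomputable section

def fmu (μ x : ℝ) : ℝ := μ - max (Real.sqrt μ - x) 0 ^ 2

/-- For `μ > 0`, `g(x) = f_μ(|x|) + x²` is convex on `ℝ`. -/
theorem g_convex (μ : ℝ) (hμ : 0 < μ) :
    ConvexOn ℝ Set.univ (fun x : ℝ => fmu μ |x| + x ^ 2) := by
  set s := Real.sqrt μ with hs
  have hs0 : 0 ≤ s := Real.sqrt_nonneg μ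
  have hs2 : s ^ 2 = μ := Real.sq_sqrt hμ.le
  have heq : (fun x : ℝ => fmu μ |x| + x ^ 2)
      = fun x : ℝ => (2 * s) * |x| + max (|x| - s) 0 ^ 2 := by
    funext x
    rcases le_total (|x|) s with h | h
    · rw [fmu, max_eq_left (by linarith), max_eq_right (by linarith)]
      nlinarith [sq_abs x]
    · rw [fmu, max_eq_right (by linarith), max_eq_left (by linarith)]
      nlinarith [sq_abs x]
  rw [heq]
  have habs : ConvexOn ℝ Set.univ (fun x : ℝ => |x|) := by
    simpa [← Real.norm_eq_abs] using convexOn_univ_norm (E := ℝ)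
  have h1 : ConvexOn ℝ Set.univ fun x : ℝ => (2 * s) * |x| := by
    simpa [smul_eq_mul] using habs.smul (by positivity : (0:ℝ) ≤ 2 * s)
  have hin : ConvexOn ℝ Set.univ fun x : ℝ => max (|x| - s) 0 :=
    (habs.sub (concaveOn_const s convex_univ)).sup (convexOn_const 0 convex_univ)
  have h2 : ConvexOn ℝ Set.univ fun x : ℝ => max (|x| - s) 0 ^ 2 := by
    exact hin.pow (fun x _ => le_max_right _ _) 2
  exact h1.add h2
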